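/- Let dμ(x;t) = exp(Σ_k t_k x^k) dμ(x) with dμ symmetric, let P_n(x;t) be the monic matrix orthogonal polynomials and H_n invertible. Then the t_2-evolution is ∂_{t_2} P_n = -(a_n b_n + b_n a_{n-1}) P_{n-1} - b_n b_{n-1} P_{n-2}, where a_n, b_n are the three-term recurrence coefficients. -/

import Mathlib

open Polynomial Finset Matrix

/-- `⟨f, x^k⟩ = Σ_i f_i m_{i+k}` in terms of moments. -/
noncomputable def momPair8 {p : ℕ} (m : ℕ → Matrix (Fin p) (Fin p) ℝ)
    (f : Polynomial (Matrix (Fin p) (Fin p) ℝ)) (k : ℕ) : Matrix (Fin p) (Fin p) ℝ :=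
  ∑ i ∈ range (f.natDegree + 1), f.coeff i * m (i + k)

namespace Stmt8Aux
variable {p : ℕ}
local notation "M" => Matrix (Fin p) (Fin p) ℝ

lemma momPair8_eq_sum (m : ℕ → M) (f : Polynomial M) (k N : ℕ)
    (hN : f.natDegree < N) :
    momPair8 m f k = ∑ i ∈ range N, f.coeff i * m (i + k) := by
  unfold momPair8
  apply Finset.sum_subset (Finset.range_subset_range.2 (by omega))
  intro i _ hi
  rw [Finset.mem_range, not_lt] at hi
  rw [Polynomial.coeff_eq_zero_of_natDegree_lt (by omega), zero_mul]

lemma momPair8_zero (m : ℕ → M) (k : ℕ) : momPair8 m (0 : Polynomial M) k = 0 := by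
  simp [momPair8]

lemma momPair8_add (m : ℕ → M) (f g : Polynomial M) (k : ℕ) :
    momPair8 m (f + g) k = momPair8 m f k + momPair8 m g k := by
  set N := max f.natDegree g.natDegree + 1 with hN
  rw [momPair8_eq_sum m (f+g) k N (lt_of_le_of_lt (natDegree_add_le f g) (by omega)),
    momPair8_eq_sum m f k N (by omega), momPair8_eq_sum m g k N (by omega)]
  simp [add_mul, Finset.sum_add_distrib]

lemma momPair8_C_mul (m : ℕ → M) (c : M) (f : Polynomial M) (k : ℕ) :
    momPair8 m (C c * f) k = c * momPair8 m f k := by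
  rw [momPair8_eq_sum m (C c * f) k (f.natDegree + 1)
      (lt_of_le_of_lt (natDegree_C_mul_le c f) (by omega)),
    momPair8_eq_sum m f k (f.natDegree + 1) (by omega), Finset.mul_sum]
  simp [coeff_C_mul, mul_assoc]

lemma momPair8_X_mul (m : ℕ → M) (f : Polynomial M) (k : ℕ) :
    momPair8 m (X * f) k = momPair8 m f (k + 1) := by
  rw [momPair8_eq_sum m (X * f) k (f.natDegree + 2)
      (by have := natDegree_mul_le (p := (X : Polynomial M)) (q := f); have := natDegree_X_le (R := M); omega),
    momPair8_eq_sum m f (k+1) (f.natDegree + 1) (by omega)]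
  rw [Finset.sum_range_succ']
  simp only [coeff_X_mul]
  have h0 : (X * f).coeff 0 = 0 := by
    rw [mul_coeff_zero]; simp
  rw [h0, zero_mul, add_zero]
  apply Finset.sum_congr rfl
  intro i _
  rw [show i + 1 + k = i + (k + 1) by omega]


noncomputable def dPoly (P : ℝ → Polynomial M) (N : ℕ) (t : ℝ) : Polynomial M :=
  ∑ k ∈ range (N + 1),
    Polynomial.C (Matrix.of fun i j => deriv (fun s => (P s).coeff k i j) t) * X ^ k

lemma dPoly_coeff (P : ℝ → Polynomial M) (N : ℕ) (t : ℝ) (k : ℕ) :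
    (dPoly P N t).coeff k =
      if k ≤ N then (Matrix.of fun i j => deriv (fun s => (P s).coeff k i j) t) else 0 := by
  unfold dPoly
  rw [Polynomial.finset_sum_coeff]
  simp only [Polynomial.coeff_C_mul, Polynomial.coeff_X_pow, mul_ite, mul_one, mul_zero]
  rw [Finset.sum_ite_eq (range (N+1)) k]
  simp [Finset.mem_range, Nat.lt_succ_iff]

lemma dPoly_natDegree_lt (P : ℝ → Polynomial M) (N : ℕ) (t : ℝ) :
    (dPoly P N t).natDegree < N + 1 := by
  rw [Nat.lt_succ_iff]
  apply Polynomial.natDegree_le_iff_coeff_eq_zero.2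
  intro k hk
  rw [dPoly_coeff, if_neg (by omega)]

lemma hasDerivAt_momPair8 (m : ℝ → ℕ → M)
    (hmom : ∀ k t i j, HasDerivAt (fun s => m s k i j) (m t (k + 2) i j) t)
    (P : ℝ → Polynomial M) (N : ℕ)
    (hdeg : ∀ s, (P s).natDegree < N + 1)
    (hdiff : ∀ k i j t, DifferentiableAt ℝ (fun s => (P s).coeff k i j) t)
    (k : ℕ) (i j : Fin p) (t : ℝ) :
    HasDerivAt (fun s => momPair8 (m s) (P s) k i j)
      ((momPair8 (m t) (dPoly P N t) k + momPair8 (m t) (P t) (k + 2)) i j) t := by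
  have hfun : (fun s => momPair8 (m s) (P s) k i j)
      = fun s => ∑ l ∈ range (N+1), ∑ q, (P s).coeff l i q * m s (l + k) q j := by
    funext s
    rw [momPair8_eq_sum _ _ _ _ (hdeg s)]
    simp [Matrix.sum_apply, Matrix.mul_apply]
  rw [hfun]
  have key : HasDerivAt
      (fun s => ∑ l ∈ range (N+1), ∑ q, (P s).coeff l i q * m s (l + k) q j)
      (∑ l ∈ range (N+1), ∑ q, (deriv (fun s => (P s).coeff l i q) t * m t (l + k) q j
        + (P t).coeff l i q * m t (l + k + 2) q j)) t := by
    apply HasDerivAt.fun_sum; intro l _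
    apply HasDerivAt.fun_sum; intro q _
    exact ((hdiff l i q t).hasDerivAt).mul (hmom (l + k) t q j)
  convert key using 1
  rw [Matrix.add_apply,
    momPair8_eq_sum (m t) (dPoly P N t) k (N+1) (dPoly_natDegree_lt P N t),
    momPair8_eq_sum (m t) (P t) (k+2) (N+1) (hdeg t),
    Matrix.sum_apply, Matrix.sum_apply, ← Finset.sum_add_distrib]
  apply Finset.sum_congr rfl
  intro l hl
  rw [Finset.mem_range, Nat.lt_succ_iff] at hl
  rw [Matrix.mul_apply, Matrix.mul_apply, ← Finset.sum_add_distrib]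
  apply Finset.sum_congr rfl
  intro q _
  rw [dPoly_coeff, if_pos hl, Matrix.of_apply, show l + (k + 2) = l + k + 2 by omega]

lemma orth_zero (m : ℕ → M) (Q : ℕ → Polynomial M)
    (hmon : ∀ j, (Q j).Monic ∧ (Q j).natDegree = j)
    (horth : ∀ j, ∀ k < j, momPair8 m (Q j) k = 0)
    (hH : ∀ j, IsUnit (momPair8 m (Q j) j))
    (d : ℕ) (f : Polynomial M)
    (hc : ∀ k, d ≤ k → f.coeff k = 0)
    (hp : ∀ k < d, momPair8 m f k = 0) : f = 0 := by
  induction d generalizing f with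
  | zero => exact Polynomial.ext fun k => by simpa using hc k (Nat.zero_le k)
  | succ d ih =>
    have h1 : (Q d).coeff d = 1 := by
      have h := (hmon d).1.coeff_natDegree
      rwa [(hmon d).2] at h
    set c := f.coeff d with hcdef
    have hg : f + C (-c) * Q d = 0 := by
      apply ih
      · intro k hk
        rw [Polynomial.coeff_add, coeff_C_mul]
        rcases eq_or_lt_of_le hk with h | h
        · rw [← h, h1, mul_one, ← hcdef, add_neg_cancel]
        · rw [hc k (by omega),
            Polynomial.coeff_eq_zero_of_natDegree_lt (by rw [(hmon d).2]; omega)]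
          simp
      · intro k hk
        rw [momPair8_add, momPair8_C_mul, hp k (by omega), horth d k hk]
        simp
    have hf : f = C c * Q d := by
      apply Polynomial.ext
      intro k
      have h := congrArg (fun q => q.coeff k) hg
      simp only [coeff_add, coeff_C_mul, coeff_zero] at h
      rw [neg_mul] at h
      rw [coeff_C_mul]
      exact add_neg_eq_zero.mp h
    have hc0 : c = 0 := by
      have h2 : momPair8 m f d = c * momPair8 m (Q d) d := by rw [hf, momPair8_C_mul]
      rw [hp d (by omega)] at h2
      calc c = c * (momPair8 m (Q d) d * Ring.inverse (momPair8 m (Q d) d)) := by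
            rw [Ring.mul_inverse_cancel _ (hH d), mul_one]
        _ = 0 := by rw [← mul_assoc, ← h2, zero_mul]
    rw [hf, hc0]; simp

end Stmt8Aux



open Stmt8Aux

/-- For `dμ(x;t) = exp(Σ_k t_k x^k) dμ(x)` the `t₂`-flow satisfies `∂_{t₂} m_k = m_{k+2}`
on moments, and the monic matrix orthogonal polynomials evolve as
`∂_{t₂} P_n = -(a_n b_n + b_n a_{n-1}) P_{n-1} - b_n b_{n-1} P_{n-2}`,
where `a_n, b_n` are the three-term recurrence coefficients, `b_n = H_n H_{n-1}⁻¹`,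
with the conventions `P_{-1} = P_{-2} = 0` (polynomials indexed by `ℤ`, vanishing for
negative index). Derivatives of matrix entries are taken entrywise in `t₂`. -/
theorem stmt8 {p : ℕ} (m : ℝ → ℕ → Matrix (Fin p) (Fin p) ℝ)
    (hsym : ∀ t k, (m t k)ᵀ = m t k)
    (hmom : ∀ k t i j, HasDerivAt (fun s => m s k i j) (m t (k + 2) i j) t)
    (P : ℝ → ℤ → Polynomial (Matrix (Fin p) (Fin p) ℝ))
    (a b : ℤ → ℝ → Matrix (Fin p) (Fin p) ℝ)
    (hneg : ∀ t n, n < 0 → P t n = 0)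
    (hmonic : ∀ t (n : ℤ), 0 ≤ n → (P t n).Monic ∧ ((P t n).natDegree : ℤ) = n)
    (horth : ∀ t (n : ℤ), 0 ≤ n → ∀ k < n.toNat, momPair8 (m t) (P t n) k = 0)
    (hH : ∀ t (n : ℤ), 0 ≤ n → IsUnit (momPair8 (m t) (P t n) n.toNat))
    (hrec : ∀ t (n : ℤ), 0 ≤ n →
      X * P t n = P t (n + 1) + C (a n t) * P t n + C (b n t) * P t (n - 1))
    (hb : ∀ (n : ℤ) t, 1 ≤ n →
      b n t = momPair8 (m t) (P t n) n.toNat *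
        Ring.inverse (momPair8 (m t) (P t (n - 1)) (n - 1).toNat))
    (hdiff : ∀ (n : ℤ) k i j t, DifferentiableAt ℝ (fun s => (P s n).coeff k i j) t) :
    ∀ (n : ℤ) t, 0 ≤ n → ∀ k i j,
      deriv (fun s => (P s n).coeff k i j) t =
        ((-(a n t * b n t + b n t * a (n - 1) t)) * (P t (n - 1)).coeff k
          - b n t * b (n - 1) t * (P t (n - 2)).coeff k) i j := by
  intro n t hn k i j
  obtain ⟨N, rfl⟩ : ∃ N : ℕ, n = (N : ℤ) := ⟨n.toNat, (Int.toNat_of_nonneg hn).symm⟩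
  clear hn
  -- basic facts about degrees and leading coefficients
  have hdegN : ∀ s (j : ℕ), (P s (j : ℤ)).natDegree = j := by
    intro s j
    have h := (hmonic s j (Int.natCast_nonneg j)).2
    exact_mod_cast h
  have honeN : ∀ s (j : ℕ), (P s (j : ℤ)).coeff j = 1 := by
    intro s j
    have h := (hmonic s j (Int.natCast_nonneg j)).1.coeff_natDegree
    rwa [hdegN s j] at h
  have hcoeff_hi : ∀ s (j k' : ℕ), j < k' → (P s (j : ℤ)).coeff k' = 0 := by
    intro s j k' hk'
    exact Polynomial.coeff_eq_zero_of_natDegree_lt (by rw [hdegN]; omega)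
  rcases Nat.eq_zero_or_pos N with hN0 | hNpos
  · -- case N = 0 : P is constant, derivative zero
    subst hN0
    have hm1 : P t ((0:ℕ) - 1 : ℤ) = 0 := hneg t _ (by norm_num)
    have hm2 : P t ((0:ℕ) - 2 : ℤ) = 0 := hneg t _ (by norm_num)
    have hconst : (fun s => (P s ((0:ℕ):ℤ)).coeff k i j)
        = fun _ => ((if k = 0 then (1 : Matrix (Fin p) (Fin p) ℝ) else 0) i j) := by
      funext s
      rcases Nat.eq_zero_or_pos k with hk0 | hkpos
      · subst hk0; rw [honeN s 0, if_pos rfl]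
      · rw [hcoeff_hi s 0 k hkpos, if_neg (by omega)]
    rw [hconst, deriv_const, hm1, hm2]
    simp
  · -- main case N ≥ 1
    set Q := dPoly (fun s => P s (N:ℤ)) N t with hQdef
    have e1 : ((N:ℤ) - 1) = ((N - 1 : ℕ) : ℤ) := by omega
    have e3 : ((N:ℤ) - 2) = (((N - 1 : ℕ) : ℤ) - 1) := by omega
    -- H j and its unit property
    have hHU : ∀ j : ℕ, IsUnit (momPair8 (m t) (P t (j:ℤ)) j) := by
      intro j
      have h := hH t (j:ℤ) (Int.natCast_nonneg j)
      rwa [show ((j:ℤ)).toNat = j by omega] at h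
    -- b_j * H_{j-1} = H_j
    have hbH : ∀ j : ℕ, 1 ≤ j →
        b (j:ℤ) t * momPair8 (m t) (P t ((j - 1 : ℕ):ℤ)) (j-1)
          = momPair8 (m t) (P t (j:ℤ)) j := by
      intro j hj
      have hb' := hb (j:ℤ) t (by exact_mod_cast hj)
      rw [show ((j:ℤ) - 1) = ((j - 1 : ℕ):ℤ) by omega,
        show ((j:ℤ)).toNat = j by omega,
        show (((j - 1:ℕ)):ℤ).toNat = j - 1 by omega] at hb'
      rw [hb', mul_assoc, Ring.inverse_mul_cancel _ (hHU (j-1)), mul_one]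
    -- Fact A : pairing of the derivative polynomial
    have factA : ∀ k' : ℕ, k' < N →
        momPair8 (m t) Q k' = - momPair8 (m t) (P t (N:ℤ)) (k' + 2) := by
      intro k' hk'
      ext i' j'
      have hd := hasDerivAt_momPair8 m hmom (fun s => P s (N:ℤ)) N
        (fun s => by rw [hdegN]; omega) (fun k i j t => hdiff (N:ℤ) k i j t) k' i' j' t
      have hzero : (fun s => momPair8 (m s) (P s (N:ℤ)) k' i' j') = fun _ => (0:ℝ) := by
        funext s
        rw [horth s (N:ℤ) (Int.natCast_nonneg N) k' (by omega)]
        rfl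
      rw [hzero] at hd
      have hu := hd.unique (hasDerivAt_const t 0)
      have h2 : momPair8 (m t) Q k' i' j'
          + momPair8 (m t) (P t (N:ℤ)) (k' + 2) i' j' = 0 := by
        rw [← Matrix.add_apply]; exact hu
      rw [Matrix.neg_apply]
      linarith
    -- Fact B : pairing of the recurrence
    have factB : ∀ j : ℕ, momPair8 (m t) (P t (j:ℤ)) (j+1)
        = a (j:ℤ) t * momPair8 (m t) (P t (j:ℤ)) j
          + b (j:ℤ) t * momPair8 (m t) (P t ((j:ℤ) - 1)) j := by
      intro j
      have h := congrArg (fun f => momPair8 (m t) f j) (hrec t (j:ℤ) (Int.natCast_nonneg j))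
      rw [momPair8_X_mul, momPair8_add, momPair8_add, momPair8_C_mul, momPair8_C_mul] at h
      have h0 : momPair8 (m t) (P t ((j:ℤ)+1)) j = 0 :=
        horth t ((j:ℤ)+1) (by omega) j (by omega)
      rw [h0, zero_add] at h
      exact h
    -- the combination that must vanish
    set c1 := a (N:ℤ) t * b (N:ℤ) t + b (N:ℤ) t * a ((N:ℤ) - 1) t with hc1def
    set c2 := b (N:ℤ) t * b ((N:ℤ) - 1) t with hc2def
    set f := Q + C c1 * P t ((N:ℤ) - 1) + C c2 * P t ((N:ℤ) - 2) with hfdef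
    have hf0 : f = 0 := by
      apply orth_zero (m t) (fun j => P t (j:ℤ))
        (fun j => ⟨(hmonic t j (Int.natCast_nonneg j)).1, hdegN t j⟩)
        (fun j k' hk' => horth t (j:ℤ) (Int.natCast_nonneg j) k' (by omega))
        (fun j => hHU j) N
      · -- coefficients ≥ N vanish
        intro k' hk'
        rw [hfdef, Polynomial.coeff_add, Polynomial.coeff_add, coeff_C_mul, coeff_C_mul]
        have hA : (P t ((N:ℤ) - 1)).coeff k' = 0 := by
          rw [e1]; exact hcoeff_hi t (N-1) k' (by omega)
        have hB : (P t ((N:ℤ) - 2)).coeff k' = 0 := by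
          rcases Nat.lt_or_ge N 2 with h2 | h2
          · rw [hneg t ((N:ℤ) - 2) (by omega)]; exact Polynomial.coeff_zero k'
          · rw [show ((N:ℤ) - 2) = ((N - 2 : ℕ):ℤ) by omega]
            exact hcoeff_hi t (N-2) k' (by omega)
        rw [hA, hB, mul_zero, mul_zero, add_zero, add_zero]
        rcases Nat.eq_or_lt_of_le hk' with h | h
        · -- k' = N : derivative of the constant leading coefficient
          ext i' j'
          rw [hQdef, dPoly_coeff, if_pos (by omega), Matrix.of_apply]
          have : (fun s => (P s (N:ℤ)).coeff k' i' j')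
              = fun _ => ((1 : Matrix (Fin p) (Fin p) ℝ) i' j') := by
            funext s; rw [← h, honeN s N]
          rw [this, deriv_const]
          rfl
        · rw [hQdef, dPoly_coeff, if_neg (by omega)]
      · -- pairings < N vanish
        intro k' hk'
        rw [hfdef, momPair8_add, momPair8_add, momPair8_C_mul, momPair8_C_mul,
          factA k' hk']
        rcases Nat.lt_or_ge (k' + 2) N with hlt | hge
        · -- low case : everything orthogonal
          rw [horth t (N:ℤ) (Int.natCast_nonneg N) (k'+2) (by omega)]
          rw [e1, horth t ((N-1:ℕ):ℤ) (Int.natCast_nonneg _) k' (by omega)]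
          rw [show ((N:ℤ) - 2) = ((N - 2 : ℕ):ℤ) by omega,
            horth t ((N-2:ℕ):ℤ) (Int.natCast_nonneg _) k' (by omega)]
          simp
        rcases Nat.eq_or_lt_of_le hge with heq | hgt
        · -- k' = N - 2
          have hN2 : 2 ≤ N := by omega
          rw [← heq]
          rw [e1, horth t ((N-1:ℕ):ℤ) (Int.natCast_nonneg _) k' (by omega), mul_zero,
            add_zero]
          rw [show ((N:ℤ) - 2) = ((N - 2 : ℕ):ℤ) by omega]
          rw [show k' = N - 2 by omega]
          have key : c2 * momPair8 (m t) (P t ((N-2:ℕ):ℤ)) (N-2)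
              = momPair8 (m t) (P t (N:ℤ)) N := by
            rw [hc2def, e1, mul_assoc]
            rw [show ((N-2:ℕ):ℤ) = (((N-1) - 1 : ℕ):ℤ) by omega,
              show (N - 2) = (N - 1) - 1 by omega]
            rw [hbH (N-1) (by omega), hbH N (by omega)]
          rw [key]
          simp
        · -- k' = N - 1
          have hk'1 : k' = N - 1 := by omega
          have hNk : k' + 2 = N + 1 := by omega
          rw [hNk, factB N]
          have hT : momPair8 (m t) (P t ((N:ℤ) - 1)) N
              = a ((N-1:ℕ):ℤ) t * momPair8 (m t) (P t ((N-1:ℕ):ℤ)) (N-1)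
                + b ((N-1:ℕ):ℤ) t * momPair8 (m t) (P t (((N-1:ℕ):ℤ) - 1)) (N-1) := by
            rw [e1, show N = (N-1) + 1 by omega]
            exact factB (N-1)
          rw [hT]
          rw [hk'1, e1]
          rw [show momPair8 (m t) (P t ((N:ℤ) - 2)) (N-1)
              = momPair8 (m t) (P t (((N-1:ℕ):ℤ) - 1)) (N-1) by rw [← e3]]
          rw [hc1def, hc2def, e1]
          rw [← hbH N (by omega)]
          set A := a (N:ℤ) t
          set B := b (N:ℤ) t
          set A' := a ((N-1:ℕ):ℤ) t
          set B' := b ((N-1:ℕ):ℤ) t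
          set H' := momPair8 (m t) (P t ((N-1:ℕ):ℤ)) (N-1)
          set U := momPair8 (m t) (P t (((N-1:ℕ):ℤ) - 1)) (N-1)
          noncomm_ring
      -- done with orth_zero applications
    -- extract the coefficient identity
    have hcoeffeq : ∀ k' : ℕ, Q.coeff k'
        = -(c1 * (P t ((N:ℤ) - 1)).coeff k') + -(c2 * (P t ((N:ℤ) - 2)).coeff k') := by
      intro k'
      have h := congrArg (fun q => q.coeff k') hf0
      simp only [hfdef, Polynomial.coeff_add, coeff_C_mul, Polynomial.coeff_zero] at h
      rw [add_assoc] at h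
      rw [eq_neg_of_add_eq_zero_left h, neg_add]
    rcases le_or_gt k N with hkN | hkN
    · have hQk : deriv (fun s => (P s (N:ℤ)).coeff k i j) t = Q.coeff k i j := by
        rw [hQdef, dPoly_coeff, if_pos hkN]; rfl
      rw [hQk, hcoeffeq k]
      have : -(c1 * (P t ((N:ℤ) - 1)).coeff k) + -(c2 * (P t ((N:ℤ) - 2)).coeff k)
          = (-c1) * (P t ((N:ℤ) - 1)).coeff k - c2 * (P t ((N:ℤ) - 2)).coeff k := by
        rw [neg_mul]; abel
      rw [this]
    · have hconst : (fun s => (P s (N:ℤ)).coeff k i j) = fun _ => (0:ℝ) := by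
        funext s
        rw [hcoeff_hi s N k hkN]
        rfl
      rw [hconst, deriv_const]
      have hA : (P t ((N:ℤ) - 1)).coeff k = 0 := by
        rw [e1]; exact hcoeff_hi t (N-1) k (by omega)
      have hB : (P t ((N:ℤ) - 2)).coeff k = 0 := by
        rcases Nat.lt_or_ge N 2 with h2 | h2
        · rw [hneg t ((N:ℤ) - 2) (by omega)]; exact Polynomial.coeff_zero k
        · rw [show ((N:ℤ) - 2) = ((N - 2 : ℕ):ℤ) by omega]
          exact hcoeff_hi t (N-2) k (by omega)
      rw [hA, hB, mul_zero, mul_zero, sub_zero]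
      simp
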